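/- Let m ≥ 2 with m - 1 dividing 2^(m-2) - 1 and m - 1 ≡ 5 (mod 10). Then m - 1 ≡ 5 (mod 20). -/
import Mathlib

lemma pow2mod5 (k : ℕ) : 2 ^ k % 5 = 2 ^ (k % 4) % 5 := by
  conv_lhs => rw [← Nat.div_add_mod k 4, pow_add, pow_mul]
  rw [Nat.mul_mod, Nat.pow_mod]
  norm_num

theorem m_sub_one_five_mod_twenty (m : ℕ) (hm : 2 ≤ m)
    (hdvd : (m - 1) ∣ 2 ^ (m - 2) - 1) (h10 : m - 1 ≡ 5 [MOD 10]) :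
    m - 1 ≡ 5 [MOD 20] := by
  have h10' : (m - 1) % 10 = 5 := h10
  have hm6 : 6 ≤ m := by omega
  have h5 : 5 ∣ (m - 1) := by omega
  have h5d : 5 ∣ 2 ^ (m - 2) - 1 := h5.trans hdvd
  have hpos : 1 ≤ 2 ^ (m - 2) := Nat.one_le_two_pow
  have h1 : 2 ^ (m - 2) % 5 = 1 := by omega
  rw [pow2mod5] at h1
  have hk : (m - 2) % 4 = 0 := by
    have h4 := Nat.mod_lt (m - 2) (show 0 < 4 by norm_num)
    interval_cases h : (m - 2) % 4 <;> simp_all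
  show (m - 1) % 20 = 5 % 20
  omega
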